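/- Let t ∈ ℂ with t ≠ 0 and t ≠ 1. The conjugacy class of the matrix [[1,0,1],[0,t,0],[0,0,1]] in the group Ũ₃(ℂ) is exactly the set of matrices [[1,b,c],[0,t,e],[0,0,1]] with c(t−1) ≠ be. -/

import Mathlib

open Matrix

/-- `3 × 3` matrices over `F`. -/
abbrev M3 (F : Type*) := Matrix (Fin 3) (Fin 3) F

/-- Membership in the group `Ũ₃(F)` of upper triangular `3 × 3` matrices
`[[a,b,c],[0,d,e],[0,0,1]]` with `a, d ≠ 0` and `(3,3)`-entry equal to `1`. -/
def inU3 {F : Type*} [Field F] (A : M3 F) : Prop :=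
  A 0 0 ≠ 0 ∧ A 1 1 ≠ 0 ∧ A 2 2 = 1 ∧ A 1 0 = 0 ∧ A 2 0 = 0 ∧ A 2 1 = 0

theorem stmt_14 (t : ℂ) (ht0 : t ≠ 0) (ht1 : t ≠ 1) :
    {B : M3 ℂ | ∃ P Q : M3 ℂ, inU3 P ∧ inU3 Q ∧ P * Q = 1 ∧
        B = P * !![1, 0, 1; 0, t, 0; 0, 0, 1] * Q} =
      {B : M3 ℂ | ∃ b c e : ℂ, c * (t - 1) ≠ b * e ∧ B = !![1, b, c; 0, t, e; 0, 0, 1]} := by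
  have ht1' : t - 1 ≠ 0 := sub_ne_zero.mpr ht1
  have ht1'' : 1 - t ≠ 0 := fun h0 => ht1 (sub_eq_zero.mp h0).symm
  ext B
  simp only [Set.mem_setOf_eq]
  constructor
  · rintro ⟨P, Q, ⟨ha, hd, hP22, hP10, hP20, hP21⟩, ⟨hq00, hq11, hq22, hq10, hq20, hq21⟩, hPQ, rfl⟩
    have e00 := congrFun (congrFun hPQ 0) 0
    have e01 := congrFun (congrFun hPQ 0) 1
    have e02 := congrFun (congrFun hPQ 0) 2
    have e11 := congrFun (congrFun hPQ 1) 1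
    have e12 := congrFun (congrFun hPQ 1) 2
    simp only [Matrix.mul_apply, Fin.sum_univ_three, Matrix.one_apply_eq,
      Matrix.one_apply_ne (by decide : (0:Fin 3) ≠ 1),
      Matrix.one_apply_ne (by decide : (0:Fin 3) ≠ 2),
      Matrix.one_apply_ne (by decide : (1:Fin 3) ≠ 2),
      hP10, hP20, hP21, hq10, hq20, hq21, hq22, hP22,
      zero_mul, mul_zero, add_zero, zero_add, mul_one] at e00 e01 e02 e11 e12
    refine ⟨P 0 1 * Q 1 1 * (t - 1), P 0 1 * Q 1 2 * (t - 1) + P 0 0,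
      P 1 1 * Q 1 2 * (t - 1), ?_, ?_⟩
    · intro h
      have key : P 0 0 * (t - 1) = 0 := by
        linear_combination h + (t - 1) ^ 2 * P 0 1 * Q 1 2 * e11
      rcases mul_eq_zero.mp key with h0 | h0
      · exact ha h0
      · exact ht1' h0
    · ext i j
      fin_cases i <;> fin_cases j <;>
        simp [Matrix.mul_apply, Fin.sum_univ_three, Matrix.vecHead, Matrix.vecTail,
          hP10, hP20, hP21, hP22, hq10, hq20, hq21, hq22] <;>
      first
        | linear_combination e00
        | linear_combination e01
        | linear_combination e02
        | linear_combination t * e11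
        | linear_combination e12
  · rintro ⟨b, c, e, h, rfl⟩
    set a : ℂ := c - b * e / (t - 1) with ha_def
    have key : a * (t - 1) = c * (t - 1) - b * e := by
      rw [ha_def]; field_simp
    have ha : a ≠ 0 := by
      intro h0
      rw [h0, zero_mul] at key
      exact h (by linear_combination -key)
    refine ⟨!![a, b/(t-1), 0; 0, 1, e/(1-t); 0, 0, 1],
      !![a⁻¹, -b/((t-1)*a), -(b*e)/((t-1)^2*a); 0, 1, e/(t-1); 0, 0, 1],
      ⟨ha, one_ne_zero, rfl, rfl, rfl, rfl⟩,
      ⟨inv_ne_zero ha, one_ne_zero, rfl, rfl, rfl, rfl⟩, ?_, ?_⟩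
    · rw [Matrix.one_fin_three]
      ext i j
      fin_cases i <;> fin_cases j <;>
        simp [Matrix.mul_apply, Fin.sum_univ_three, Matrix.vecHead, Matrix.vecTail]
      all_goals field_simp
      all_goals ring1
    · ext i j
      fin_cases i <;> fin_cases j <;>
        simp [Matrix.mul_apply, Fin.sum_univ_three, Matrix.vecHead, Matrix.vecTail]
      all_goals field_simp
      all_goals
        first
          | ring1
          | linear_combination -(a * (t - 1) ^ 3) * key
          | linear_combination (t - 1) * key
          | linear_combination key
          | linear_combination (t * b * e) * mul_inv_cancel₀ (show (-1 + t : ℂ) ≠ 0 by rw [neg_add_eq_sub]; exact ht1')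
          | linear_combination (-(b * e)) * mul_inv_cancel₀ (show (-1 + t : ℂ) ≠ 0 by rw [neg_add_eq_sub]; exact ht1')
          | linear_combination (b * e * (t - 1)) * mul_inv_cancel₀ (show (-1 + t : ℂ) ≠ 0 by rw [neg_add_eq_sub]; exact ht1')
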